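/- If A(β) ≥ 0, where β is the largest real root of B, then the asymptotic subspace recovery expression satisfies A(β)/(β·B′(β)) ≤ (c − σ̄⁴/θ⁴)/(c + σ̄²/θ²), where B′(x) = cθ² ∑_ℓ p_ℓ/(x − σ_ℓ²)², with equality if and only if σ_1² = ⋯ = σ_L². (Homoscedastic noise maximizes the asymptotic subspace recovery for a fixed average noise variance.) -/

import Mathlib

open Finset Filter Set Topology

private lemma two_le_div_add_div {a b : ℝ} (ha : 0 < a) (hb : 0 < b) :
    2 ≤ a / b + b / a := by
  rw [div_add_div _ _ hb.ne' ha.ne', le_div_iff₀ (mul_pos hb ha)]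
  nlinarith [sq_nonneg (a - b)]

private lemma two_lt_div_add_div {a b : ℝ} (ha : 0 < a) (hb : 0 < b) (hne : a ≠ b) :
    2 < a / b + b / a := by
  rw [div_add_div _ _ hb.ne' ha.ne', lt_div_iff₀ (mul_pos hb ha)]
  nlinarith [sq_pos_of_ne_zero (sub_ne_zero.2 hne)]

set_option maxHeartbeats 1000000 in
/-- if `A(β) ≥ 0` then the asymptotic subspace recovery satisfies
`A(β)/(β B′(β)) ≤ (c − σ̄⁴/θ⁴)/(c + σ̄²/θ²)`, with equality iff the noise is
homoscedastic. -/
theorem subspace_recovery_bound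
    (c θ : ℝ) (hc : 0 < c) (hθ : 0 < θ)
    (L : ℕ) (hL : 1 ≤ L) (p σ : Fin L → ℝ)
    (hp : ∀ ℓ, 0 < p ℓ) (hpsum : ∑ ℓ, p ℓ = 1)
    (hσ : ∀ ℓ, 0 < σ ℓ)
    (σmax : ℝ) (hmaxle : ∀ ℓ, σ ℓ ≤ σmax) (hmaxmem : ∃ ℓ, σ ℓ = σmax)
    (A : ℝ → ℝ) (hA : ∀ x, A x = 1 - c * ∑ ℓ, p ℓ * (σ ℓ) ^ 2 / (x - σ ℓ) ^ 2)
    (B : ℝ → ℝ) (hB : ∀ x, B x = 1 - c * θ ^ 2 * ∑ ℓ, p ℓ / (x - σ ℓ))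
    (β : ℝ) (hβmem : σmax < β) (hβroot : B β = 0)
    (B' : ℝ → ℝ) (hB' : ∀ x, B' x = c * θ ^ 2 * ∑ ℓ, p ℓ / (x - σ ℓ) ^ 2)
    (hAβ : 0 ≤ A β) :
    A β / (β * B' β) ≤ (c - (∑ ℓ, p ℓ * σ ℓ) ^ 2 / θ ^ 4) / (c + (∑ ℓ, p ℓ * σ ℓ) / θ ^ 2) ∧
    (A β / (β * B' β) = (c - (∑ ℓ, p ℓ * σ ℓ) ^ 2 / θ ^ 4) / (c + (∑ ℓ, p ℓ * σ ℓ) / θ ^ 2) ↔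
      (∀ ℓ ℓ' : Fin L, σ ℓ = σ ℓ')) := by
  haveI : Nonempty (Fin L) := ⟨⟨0, hL⟩⟩
  have hθ2 : (0:ℝ) < θ ^ 2 := by positivity
  have hK : (0:ℝ) < c * θ ^ 2 := by positivity
  have hx : ∀ ℓ, 0 < β - σ ℓ := fun ℓ => by linarith [hmaxle ℓ]
  have hβpos : 0 < β := by
    obtain ⟨ℓ, hℓ⟩ := hmaxmem
    linarith [hσ ℓ, hmaxle ℓ]
  set s : ℝ := ∑ ℓ, p ℓ * σ ℓ with hsdef
  set S1 : ℝ := ∑ ℓ, p ℓ / (β - σ ℓ) with hS1def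
  set S2 : ℝ := ∑ ℓ, p ℓ / (β - σ ℓ) ^ 2 with hS2def
  have hspos : 0 < s := Finset.sum_pos (fun ℓ _ => mul_pos (hp ℓ) (hσ ℓ)) Finset.univ_nonempty
  have hS2pos : 0 < S2 :=
    Finset.sum_pos (fun ℓ _ => div_pos (hp ℓ) (pow_pos (hx ℓ) 2)) Finset.univ_nonempty
  have hsle : s ≤ σmax := by
    calc s ≤ ∑ ℓ, p ℓ * σmax :=
          Finset.sum_le_sum fun ℓ _ => mul_le_mul_of_nonneg_left (hmaxle ℓ) (hp ℓ).le
    _ = σmax := by rw [← Finset.sum_mul, hpsum, one_mul]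
  have hsβ : s < β := lt_of_le_of_lt hsle hβmem
  -- the root equation
  have hS1eq : c * θ ^ 2 * S1 = 1 := by
    have h := hβroot
    rw [hB] at h
    rw [hS1def]
    linarith
  have hS1val : S1 = 1 / (c * θ ^ 2) := by
    rw [eq_div_iff hK.ne']
    linarith [hS1eq]
  -- formula for A β
  have hAval : A β = 1 - c * (β ^ 2 * S2 - 2 * β * S1 + 1) := by
    rw [hA]
    have hterm : ∀ ℓ : Fin L, p ℓ * σ ℓ ^ 2 / (β - σ ℓ) ^ 2
        = β ^ 2 * (p ℓ / (β - σ ℓ) ^ 2) - 2 * β * (p ℓ / (β - σ ℓ)) + p ℓ := by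
      intro ℓ
      have h := (hx ℓ).ne'
      field_simp
      ring
    rw [Finset.sum_congr rfl fun ℓ _ => hterm ℓ]
    rw [Finset.sum_add_distrib, Finset.sum_sub_distrib, ← Finset.mul_sum, ← Finset.mul_sum,
      hpsum, ← hS1def, ← hS2def]
  have hA2 : θ ^ 2 * A β = θ ^ 2 * (1 - c) + 2 * β - c * θ ^ 2 * β ^ 2 * S2 := by
    rw [hAval]
    linear_combination (2 * β) * hS1eq
  -- Cauchy–Schwarz : S1 ^ 2 ≤ S2
  have hCS1 : S1 ^ 2 ≤ S2 := by
    have h := Finset.sum_sq_le_sum_mul_sum_of_sq_eq_mul (Finset.univ : Finset (Fin L))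
      (r := fun ℓ => p ℓ / (β - σ ℓ)) (f := p) (g := fun ℓ => p ℓ / (β - σ ℓ) ^ 2)
      (fun i _ => (hp i).le)
      (fun i _ => div_nonneg (hp i).le (sq_nonneg _))
      (fun i _ => by rw [div_pow]; ring)
    simpa [hpsum, ← hS1def, ← hS2def] using h
  have hK2S2 : 1 ≤ (c * θ ^ 2) ^ 2 * S2 := by
    have h : (1 / (c * θ ^ 2)) ^ 2 ≤ S2 := by rw [← hS1val]; exact hCS1
    rw [div_pow, one_pow, div_le_iff₀ (by positivity)] at h
    linarith
  -- value of ∑ p (β - σ)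
  have hTval : ∑ ℓ, p ℓ * (β - σ ℓ) = β - s := by
    rw [hsdef]
    rw [show (fun ℓ => p ℓ * (β - σ ℓ)) = fun ℓ => p ℓ * β - p ℓ * σ ℓ from
      funext fun ℓ => by ring]
    rw [Finset.sum_sub_distrib, ← Finset.sum_mul, hpsum, one_mul]
  -- double-sum Cauchy–Schwarz : 1 ≤ S1 * (β - s), strict if heteroscedastic
  have hdouble : 2 * (S1 * (β - s)) =
      ∑ ℓ, ∑ m, p ℓ * p m * ((β - σ ℓ) / (β - σ m) + (β - σ m) / (β - σ ℓ)) := by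
    have h1 : S1 * (β - s) = ∑ ℓ, ∑ m, (p ℓ / (β - σ ℓ)) * (p m * (β - σ m)) := by
      rw [← hTval, hS1def]; exact Finset.sum_mul_sum _ _ _ _
    have h2 : (β - s) * S1 = ∑ ℓ, ∑ m, (p ℓ * (β - σ ℓ)) * (p m / (β - σ m)) := by
      rw [← hTval, hS1def]; exact Finset.sum_mul_sum _ _ _ _
    have : 2 * (S1 * (β - s)) = (S1 * (β - s)) + (β - s) * S1 := by ring
    rw [this, h1, h2, ← Finset.sum_add_distrib]
    refine Finset.sum_congr rfl fun ℓ _ => ?_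
    rw [← Finset.sum_add_distrib]
    refine Finset.sum_congr rfl fun m _ => ?_
    ring
  have hconst : ∑ ℓ, ∑ m, p ℓ * p m * (2:ℝ) = 2 := by
    have h : ∀ ℓ : Fin L, ∑ m, p ℓ * p m * (2:ℝ) = p ℓ * 2 := by
      intro ℓ
      rw [show (fun m => p ℓ * p m * (2:ℝ)) = fun m => p ℓ * 2 * p m from
        funext fun m => by ring]
      rw [← Finset.mul_sum, hpsum, mul_one]
    rw [Finset.sum_congr rfl fun ℓ _ => h ℓ, ← Finset.sum_mul, hpsum, one_mul]
  have hCS2 : 1 ≤ S1 * (β - s) := by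
    have h : ∑ ℓ, ∑ m, p ℓ * p m * (2:ℝ) ≤
        ∑ ℓ, ∑ m, p ℓ * p m * ((β - σ ℓ) / (β - σ m) + (β - σ m) / (β - σ ℓ)) := by
      refine Finset.sum_le_sum fun ℓ _ => Finset.sum_le_sum fun m _ => ?_
      exact mul_le_mul_of_nonneg_left (two_le_div_add_div (hx ℓ) (hx m))
        (mul_pos (hp ℓ) (hp m)).le
    rw [hconst] at h
    rw [← hdouble] at h
    linarith
  have hCS2strict : (¬ ∀ ℓ ℓ' : Fin L, σ ℓ = σ ℓ') → 1 < S1 * (β - s) := by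
    intro hnh
    push_neg at hnh
    obtain ⟨i, j, hij⟩ := hnh
    have h : ∑ ℓ, ∑ m, p ℓ * p m * (2:ℝ) <
        ∑ ℓ, ∑ m, p ℓ * p m * ((β - σ ℓ) / (β - σ m) + (β - σ m) / (β - σ ℓ)) := by
      refine Finset.sum_lt_sum
        (fun ℓ _ => Finset.sum_le_sum fun m _ =>
          mul_le_mul_of_nonneg_left (two_le_div_add_div (hx ℓ) (hx m))
            (mul_pos (hp ℓ) (hp m)).le)
        ⟨i, Finset.mem_univ i, ?_⟩
      refine Finset.sum_lt_sum
        (fun m _ => mul_le_mul_of_nonneg_left (two_le_div_add_div (hx i) (hx m))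
          (mul_pos (hp i) (hp m)).le)
        ⟨j, Finset.mem_univ j, ?_⟩
      have hxne : β - σ i ≠ β - σ j := fun h => hij (by linarith [h])
      exact mul_lt_mul_of_pos_left (two_lt_div_add_div (hx i) (hx j) hxne)
        (mul_pos (hp i) (hp j))
    rw [hconst, ← hdouble] at h
    linarith
  -- consequence: c θ² + s ≤ β (strict under heteroscedasticity)
  have hβK : c * θ ^ 2 + s ≤ β := by
    have h := hCS2
    rw [hS1val, one_div, inv_mul_eq_div, le_div_iff₀ hK] at h
    linarith
  -- a' ≥ 0
  have ha' : 0 ≤ θ ^ 2 * (1 - c) + 2 * β := by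
    have h1 : 0 ≤ θ ^ 2 * A β := mul_nonneg hθ2.le hAβ
    have h2 : 0 < c * θ ^ 2 * β ^ 2 * S2 := by positivity
    linarith [hA2]
  -- step A
  have stepA : θ ^ 2 * A β ≤
      ((θ ^ 2 * (1 - c) + 2 * β) * (c * θ ^ 2) - β ^ 2) * ((c * θ ^ 2) * S2) := by
    nlinarith [mul_nonneg ha' (by linarith : (0:ℝ) ≤ (c * θ ^ 2) ^ 2 * S2 - 1), hA2]
  -- step B
  have hfac : 0 < c * θ ^ 4 + c * θ ^ 2 * (β - c * θ ^ 2 + s) + s * (β - c * θ ^ 2) := by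
    have hb : 0 < β - c * θ ^ 2 := by linarith
    have h1 : 0 < c * θ ^ 2 * (β - c * θ ^ 2 + s) := mul_pos hK (by linarith)
    have h2 : 0 < s * (β - c * θ ^ 2) := mul_pos hspos hb
    have h3 : 0 < c * θ ^ 4 := by positivity
    linarith
  have hBident : (c * θ ^ 4 - s ^ 2) * β -
      ((θ ^ 2 * (1 - c) + 2 * β) * (c * θ ^ 2) - β ^ 2) * (c * θ ^ 2 + s) =
      (β - c * θ ^ 2 - s) *
        (c * θ ^ 4 + c * θ ^ 2 * (β - c * θ ^ 2 + s) + s * (β - c * θ ^ 2)) := by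
    ring
  have stepB : ((θ ^ 2 * (1 - c) + 2 * β) * (c * θ ^ 2) - β ^ 2) * (c * θ ^ 2 + s)
      ≤ (c * θ ^ 4 - s ^ 2) * β := by
    linarith [mul_nonneg (by linarith : (0:ℝ) ≤ β - c * θ ^ 2 - s) hfac.le, hBident]
  -- main polynomial inequality (with strict variant)
  have hKS2 : 0 < (c * θ ^ 2) * S2 := mul_pos hK hS2pos
  have chain : θ ^ 2 * A β * (c * θ ^ 2 + s) ≤ (c * θ ^ 4 - s ^ 2) * β * ((c * θ ^ 2) * S2) := by
    have h1 : θ ^ 2 * A β * (c * θ ^ 2 + s) ≤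
        ((θ ^ 2 * (1 - c) + 2 * β) * (c * θ ^ 2) - β ^ 2) * ((c * θ ^ 2) * S2) *
          (c * θ ^ 2 + s) :=
      mul_le_mul_of_nonneg_right stepA (by positivity)
    have h2 : ((θ ^ 2 * (1 - c) + 2 * β) * (c * θ ^ 2) - β ^ 2) * (c * θ ^ 2 + s) *
        ((c * θ ^ 2) * S2) ≤ (c * θ ^ 4 - s ^ 2) * β * ((c * θ ^ 2) * S2) :=
      mul_le_mul_of_nonneg_right stepB hKS2.le
    linarith [h1, h2]
  have chain_lt : (¬ ∀ ℓ ℓ' : Fin L, σ ℓ = σ ℓ') →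
      θ ^ 2 * A β * (c * θ ^ 2 + s) < (c * θ ^ 4 - s ^ 2) * β * ((c * θ ^ 2) * S2) := by
    intro hnh
    have hstr := hCS2strict hnh
    have hβKlt : c * θ ^ 2 + s < β := by
      rw [hS1val, one_div, inv_mul_eq_div, lt_div_iff₀ hK] at hstr
      linarith
    have stepBlt : ((θ ^ 2 * (1 - c) + 2 * β) * (c * θ ^ 2) - β ^ 2) * (c * θ ^ 2 + s)
        < (c * θ ^ 4 - s ^ 2) * β := by
      linarith [mul_pos (by linarith : (0:ℝ) < β - c * θ ^ 2 - s) hfac, hBident]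
    have h1 : θ ^ 2 * A β * (c * θ ^ 2 + s) ≤
        ((θ ^ 2 * (1 - c) + 2 * β) * (c * θ ^ 2) - β ^ 2) * ((c * θ ^ 2) * S2) *
          (c * θ ^ 2 + s) :=
      mul_le_mul_of_nonneg_right stepA (by positivity)
    have h2 : ((θ ^ 2 * (1 - c) + 2 * β) * (c * θ ^ 2) - β ^ 2) * (c * θ ^ 2 + s) *
        ((c * θ ^ 2) * S2) < (c * θ ^ 4 - s ^ 2) * β * ((c * θ ^ 2) * S2) :=
      mul_lt_mul_of_pos_right stepBlt hKS2
    linarith [h1, h2]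
  -- denominators
  have hDpos : 0 < β * B' β := by
    rw [hB', ← hS2def]
    positivity
  have hRden : 0 < c + s / θ ^ 2 := by positivity
  have hden2 : 0 < θ ^ 2 * (c * θ ^ 2 + s) := by positivity
  have hRval : (c - s ^ 2 / θ ^ 4) / (c + s / θ ^ 2)
      = (c * θ ^ 4 - s ^ 2) / (θ ^ 2 * (c * θ ^ 2 + s)) := by
    rw [div_eq_div_iff hRden.ne' hden2.ne']
    field_simp
  have main_le : A β / (β * B' β) ≤ (c - s ^ 2 / θ ^ 4) / (c + s / θ ^ 2) := by
    rw [hRval, div_le_div_iff₀ hDpos hden2, hB', ← hS2def]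
    linarith [chain]
  have main_lt : (¬ ∀ ℓ ℓ' : Fin L, σ ℓ = σ ℓ') →
      A β / (β * B' β) < (c - s ^ 2 / θ ^ 4) / (c + s / θ ^ 2) := by
    intro hnh
    rw [hRval, div_lt_div_iff₀ hDpos hden2, hB', ← hS2def]
    linarith [chain_lt hnh]
  refine ⟨main_le, ?_, ?_⟩
  · -- equality → homoscedastic
    intro heq
    by_contra hnh
    exact absurd heq (ne_of_lt (main_lt hnh))
  · -- homoscedastic → equality
    intro hhomo
    have hσs : ∀ ℓ, σ ℓ = s := by
      intro ℓ
      have h1 : ∑ m, p m * σ m = ∑ m, p m * σ ℓ :=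
        Finset.sum_congr rfl fun m _ => by rw [hhomo m ℓ]
      rw [hsdef, h1, ← Finset.sum_mul, hpsum, one_mul]
    have hβval : β = c * θ ^ 2 + s := by
      have hS1' : S1 = 1 / (β - s) := by
        have h1 : ∑ ℓ, p ℓ / (β - σ ℓ) = ∑ ℓ, p ℓ / (β - s) :=
          Finset.sum_congr rfl fun ℓ _ => by rw [hσs ℓ]
        rw [hS1def, h1, ← Finset.sum_div, hpsum]
      have h := hS1eq
      rw [hS1'] at h
      have hne : β - s ≠ 0 := sub_ne_zero.2 hsβ.ne'
      rw [mul_one_div, div_eq_one_iff_eq hne] at h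
      linarith only [h]
    have hS2val : S2 = 1 / (c * θ ^ 2) ^ 2 := by
      have h1 : ∑ ℓ, p ℓ / (β - σ ℓ) ^ 2 = ∑ ℓ, p ℓ / (β - s) ^ 2 :=
        Finset.sum_congr rfl fun ℓ _ => by rw [hσs ℓ]
      rw [hS2def, h1, ← Finset.sum_div, hpsum, hβval,
        show c * θ ^ 2 + s - s = c * θ ^ 2 from by ring]
    rw [hAval, hB', ← hS2def, hS2val, hS1val, hβval]
    have hne1 : (c * θ ^ 2 : ℝ) ≠ 0 := hK.ne'
    have hne2 : (c * θ ^ 2 + s : ℝ) ≠ 0 := by positivity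
    have hne3 : (θ : ℝ) ≠ 0 := hθ.ne'
    have hne4 : (c + s / θ ^ 2 : ℝ) ≠ 0 := hRden.ne'
    field_simp
    ring
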